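/- arXiv:0710.0868 — 6 statements merged into one kernel-verified Lean document; each statement's English description precedes it below -/
import Mathlib

section
/- Let r be a C² real-valued function on an open set V ⊆ ℂⁿ with r(p)=0, ∇r(p) ≠ 0, and suppose the Levi form of r at p is strictly positive on the complex tangent space: L_p(r,t) > 0 whenever ∂r_p(t)=0 and t ≠ 0. Then for all sufficiently large M > 0 there exists c > 0 such that the function ρ = r + M r² satisfies L_p(ρ, t) ≥ c‖t‖² for all t ∈ ℂⁿ. -/
/-- The Wirtinger derivative `∂f/∂zⱼ` at `p` of a function on `ℂⁿ`. -/
noncomputable def wirtingerD {n : ℕ} (f : (Fin n → ℂ) → ℂ) (p : Fin n → ℂ) (j : Fin n) : ℂ :=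
  (fderiv ℝ f p (Pi.single j 1) - Complex.I * fderiv ℝ f p (Pi.single j Complex.I)) / 2

/-- The conjugate Wirtinger derivative `∂f/∂z̄ⱼ` at `p`. -/
noncomputable def wirtingerDBar {n : ℕ} (f : (Fin n → ℂ) → ℂ) (p : Fin n → ℂ) (j : Fin n) : ℂ :=
  (fderiv ℝ f p (Pi.single j 1) + Complex.I * fderiv ℝ f p (Pi.single j Complex.I)) / 2

/-- The Levi form `L_p(r,t) = Σ_{j,k} ∂²r/∂zⱼ∂z̄ₖ(p) tⱼ t̄ₖ` of a real function `r`. -/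
noncomputable def leviForm {n : ℕ} (r : (Fin n → ℂ) → ℝ) (p : Fin n → ℂ) (t : Fin n → ℂ) : ℂ :=
  ∑ j, ∑ k,
    wirtingerDBar (fun q => wirtingerD (fun z => ((r z : ℂ))) q j) p k * t j * (starRingEnd ℂ) (t k)

section Helpers
variable {n : ℕ} {f g : (Fin n → ℂ) → ℂ} {p : Fin n → ℂ} {j : Fin n}

theorem wd_congr (h : f =ᶠ[nhds p] g) : wirtingerD f p j = wirtingerD g p j := by
  unfold wirtingerD; rw [h.fderiv_eq]

theorem wdbar_congr (h : f =ᶠ[nhds p] g) : wirtingerDBar f p j = wirtingerDBar g p j := by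
  unfold wirtingerDBar; rw [h.fderiv_eq]

theorem wd_add (hf : DifferentiableAt ℝ f p) (hg : DifferentiableAt ℝ g p) :
    wirtingerD (fun z => f z + g z) p j = wirtingerD f p j + wirtingerD g p j := by
  unfold wirtingerD; rw [fderiv_fun_add hf hg]; simp; ring

theorem wdbar_add (hf : DifferentiableAt ℝ f p) (hg : DifferentiableAt ℝ g p) :
    wirtingerDBar (fun z => f z + g z) p j = wirtingerDBar f p j + wirtingerDBar g p j := by
  unfold wirtingerDBar; rw [fderiv_fun_add hf hg]; simp; ring

theorem wd_mul (hf : DifferentiableAt ℝ f p) (hg : DifferentiableAt ℝ g p) :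
    wirtingerD (fun z => f z * g z) p j = wirtingerD f p j * g p + f p * wirtingerD g p j := by
  unfold wirtingerD; rw [fderiv_fun_mul hf hg]; simp [smul_eq_mul]; ring

theorem wdbar_mul (hf : DifferentiableAt ℝ f p) (hg : DifferentiableAt ℝ g p) :
    wirtingerDBar (fun z => f z * g z) p j
      = wirtingerDBar f p j * g p + f p * wirtingerDBar g p j := by
  unfold wirtingerDBar; rw [fderiv_fun_mul hf hg]; simp [smul_eq_mul]; ring

theorem wd_const_mul (c : ℂ) (hf : DifferentiableAt ℝ f p) :
    wirtingerD (fun z => c * f z) p j = c * wirtingerD f p j := by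
  unfold wirtingerD; rw [fderiv_const_mul hf]; simp [smul_eq_mul]; ring

theorem wdbar_const_add (c : ℂ) (hf : DifferentiableAt ℝ f p) :
    wirtingerDBar (fun z => c + f z) p j = wirtingerDBar f p j := by
  unfold wirtingerDBar; rw [fderiv_const_add]

theorem wdbar_const_mul (c : ℂ) (hf : DifferentiableAt ℝ f p) :
    wirtingerDBar (fun z => c * f z) p j = c * wirtingerDBar f p j := by
  unfold wirtingerDBar; rw [fderiv_const_mul hf]; simp [smul_eq_mul]; ring

theorem fderiv_ofReal {r : (Fin n → ℂ) → ℝ} (hr : DifferentiableAt ℝ r p) (v : Fin n → ℂ) :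
    fderiv ℝ (fun z => ((r z : ℂ))) p v = ((fderiv ℝ r p v : ℝ) : ℂ) := by
  have : fderiv ℝ (fun z => ((r z : ℂ))) p = Complex.ofRealCLM.comp (fderiv ℝ r p) :=
    (Complex.ofRealCLM.hasFDerivAt.comp p hr.hasFDerivAt).fderiv
  rw [this]; rfl

theorem wdbar_conj_real {r : (Fin n → ℂ) → ℝ} (hr : DifferentiableAt ℝ r p) :
    wirtingerDBar (fun z => ((r z : ℂ))) p j
      = (starRingEnd ℂ) (wirtingerD (fun z => ((r z : ℂ))) p j) := by
  unfold wirtingerD wirtingerDBar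
  rw [fderiv_ofReal hr, fderiv_ofReal hr]
  simp [map_div₀, Complex.conj_ofReal]
  rw [map_ofNat]

theorem diffAt_wd {V : Set (Fin n → ℂ)} (hV : IsOpen V) (hp : p ∈ V)
    (hf : ContDiffOn ℝ 2 f V) :
    DifferentiableAt ℝ (fun q => wirtingerD f q j) p := by
  have h1 : ContDiffOn ℝ 1 (fun x => fderiv ℝ f x) V :=
    hf.fderiv_of_isOpen (m := 1) hV (by norm_num)
  have h2 : DifferentiableAt ℝ (fun x => fderiv ℝ f x) p :=
    (h1.differentiableOn (by norm_num) p hp).differentiableAt (hV.mem_nhds hp)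
  have e1 : DifferentiableAt ℝ (fun q => fderiv ℝ f q (Pi.single j 1)) p :=
    h2.clm_apply (differentiableAt_const _)
  have e2 : DifferentiableAt ℝ (fun q => fderiv ℝ f q (Pi.single j Complex.I)) p :=
    h2.clm_apply (differentiableAt_const _)
  unfold wirtingerD
  simp only [div_eq_mul_inv]
  exact ((e1.sub (e2.const_mul Complex.I)).mul_const ((2 : ℂ)⁻¹))

theorem key_term {V : Set (Fin n → ℂ)} (hV : IsOpen V) (hp : p ∈ V)
    {r : (Fin n → ℂ) → ℝ} (hr : ContDiffOn ℝ 2 r V) (hr0 : r p = 0) (M : ℝ) (j k : Fin n) :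
    wirtingerDBar (fun q => wirtingerD (fun z => (((r z + M * r z ^ 2 : ℝ) : ℂ))) q j) p k
      = wirtingerDBar (fun q => wirtingerD (fun z => ((r z : ℂ))) q j) p k
        + wirtingerD (fun z => ((r z : ℂ))) p j
          * ((2 * M : ℂ) * (starRingEnd ℂ) (wirtingerD (fun z => ((r z : ℂ))) p k)) := by
  set f : (Fin n → ℂ) → ℂ := fun z => ((r z : ℂ)) with hf
  have hfC : ContDiffOn ℝ 2 f V := Complex.ofRealCLM.contDiff.comp_contDiffOn hr
  have hdf : ∀ q ∈ V, DifferentiableAt ℝ f q := fun q hq =>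
    ((hfC.differentiableOn (by norm_num) q hq).differentiableAt (hV.mem_nhds hq))
  -- eventual equality of the inner derivative
  have hev : (fun q => wirtingerD (fun z => (((r z + M * r z ^ 2 : ℝ) : ℂ))) q j)
      =ᶠ[nhds p] (fun q => wirtingerD f q j * (1 + (2 * M : ℂ) * f q)) := by
    filter_upwards [hV.mem_nhds hp] with q hq
    have hfq := hdf q hq
    have hsq : DifferentiableAt ℝ (fun z => f z * f z) q := hfq.mul hfq
    have h1 : (fun z => (((r z + M * r z ^ 2 : ℝ) : ℂ)))
        = fun z => f z + (M : ℂ) * (f z * f z) := by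
      funext z; simp only [hf]; push_cast; ring
    rw [h1, wd_add hfq ((hsq.const_mul _)), wd_const_mul _ hsq, wd_mul hfq hfq]
    ring
  rw [wdbar_congr hev]
  have hu : DifferentiableAt ℝ (fun q => wirtingerD f q j) p := diffAt_wd hV hp hfC
  have hv : DifferentiableAt ℝ (fun q => 1 + (2 * M : ℂ) * f q) p :=
    ((hdf p hp).const_mul _).const_add 1
  rw [wdbar_mul hu hv]
  have hfp : f p = 0 := by simp [hf, hr0]
  have hvp : 1 + (2 * M : ℂ) * f p = 1 := by rw [hfp]; ring
  rw [hvp, wdbar_const_add _ ((hdf p hp).const_mul _), wdbar_const_mul _ (hdf p hp),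
    wdbar_conj_real ((hr.differentiableOn (by norm_num) p hp).differentiableAt (hV.mem_nhds hp))]
  ring

theorem key_levi {V : Set (Fin n → ℂ)} (hV : IsOpen V) (hp : p ∈ V)
    {r : (Fin n → ℂ) → ℝ} (hr : ContDiffOn ℝ 2 r V) (hr0 : r p = 0) (M : ℝ) (t : Fin n → ℂ) :
    leviForm (fun z => r z + M * r z ^ 2) p t
      = leviForm r p t + (2 * M : ℂ) * (∑ j, wirtingerD (fun z => ((r z : ℂ))) p j * t j)
          * (starRingEnd ℂ) (∑ j, wirtingerD (fun z => ((r z : ℂ))) p j * t j) := by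
  have h2 : (starRingEnd ℂ) (∑ j, wirtingerD (fun z => ((r z : ℂ))) p j * t j)
      = ∑ k, (starRingEnd ℂ) (wirtingerD (fun z => ((r z : ℂ))) p k) * (starRingEnd ℂ) (t k) := by
    rw [map_sum]; simp [map_mul]
  have h1 : leviForm (fun z => r z + M * r z ^ 2) p t
      = ∑ j, ∑ k,
          ((wirtingerDBar (fun q => wirtingerD (fun z => ((r z : ℂ))) q j) p k
            + wirtingerD (fun z => ((r z : ℂ))) p j
              * ((2 * M : ℂ) * (starRingEnd ℂ) (wirtingerD (fun z => ((r z : ℂ))) p k)))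
            * t j * (starRingEnd ℂ) (t k)) := by
    unfold leviForm
    refine Finset.sum_congr rfl fun j _ => Finset.sum_congr rfl fun k _ => ?_
    rw [key_term hV hp hr hr0 M j k]
  rw [h1, h2, mul_assoc, Finset.sum_mul_sum, Finset.mul_sum]
  unfold leviForm
  rw [← Finset.sum_add_distrib]
  refine Finset.sum_congr rfl fun j _ => ?_
  rw [Finset.mul_sum, ← Finset.sum_add_distrib]
  refine Finset.sum_congr rfl fun k _ => ?_
  ring

end Helpers

/-- If `r` is strictly plurisubharmonic on the complex tangent space at `p`
(strict pseudoconvexity), then for all large `M` the function `ρ = r + M r²` has Levi form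
at `p` bounded below by `c‖t‖²` on all of `ℂⁿ`. -/
theorem stmt_2 (n : ℕ) (V : Set (Fin n → ℂ)) (hV : IsOpen V) (r : (Fin n → ℂ) → ℝ)
    (p : Fin n → ℂ) (hp : p ∈ V) (hr : ContDiffOn ℝ 2 r V) (hr0 : r p = 0)
    (hgrad : fderiv ℝ r p ≠ 0)
    (hstrict : ∀ t : Fin n → ℂ,
      (∑ j, wirtingerD (fun z => ((r z : ℂ))) p j * t j) = 0 → t ≠ 0 →
        0 < (leviForm r p t).re) :
    ∃ M₀ : ℝ, ∀ M ≥ M₀, ∃ c > 0, ∀ t : Fin n → ℂ,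
      c * ‖t‖ ^ 2 ≤ (leviForm (fun z => r z + M * r z ^ 2) p t).re := by
  classical
  set d := fun j => wirtingerD (fun z => ((r z : ℂ))) p j with hd
  set φ : (Fin n → ℂ) → ℝ := fun t => (leviForm r p t).re with hφ
  set ψ : (Fin n → ℂ) → ℝ := fun t => Complex.normSq (∑ j, d j * t j) with hψ
  have hψ0 : ∀ t, 0 ≤ ψ t := fun t => Complex.normSq_nonneg _
  -- the Levi form of ρ_M
  have hre : ∀ (M : ℝ) (t : Fin n → ℂ),
      (leviForm (fun z => r z + M * r z ^ 2) p t).re = φ t + 2 * M * ψ t := by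
    intro M t
    rw [key_levi hV hp hr hr0 M t]
    rw [mul_assoc, Complex.mul_conj]
    have : (2 : ℂ) * (M : ℂ) * ((Complex.normSq (∑ j, d j * t j) : ℝ) : ℂ)
        = ((2 * M * ψ t : ℝ) : ℂ) := by push_cast [hψ]; ring
    rw [this, Complex.add_re, Complex.ofReal_re]
  -- continuity
  have hφc : Continuous φ := by
    apply Complex.continuous_re.comp
    apply continuous_finset_sum; intro j _
    apply continuous_finset_sum; intro k _
    exact (continuous_const.mul (continuous_apply j)).mul
      (continuous_star.comp (continuous_apply k))
  have hψc : Continuous ψ := by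
    exact Complex.continuous_normSq.comp
      (continuous_finset_sum _ fun j _ => continuous_const.mul (continuous_apply j))
  -- homogeneity
  have hφh : ∀ (s : ℝ) (t : Fin n → ℂ), φ (s • t) = s ^ 2 * φ t := by
    intro s t
    have : leviForm r p (s • t) = ((s ^ 2 : ℝ) : ℂ) * leviForm r p t := by
      unfold leviForm
      rw [Finset.mul_sum]
      refine Finset.sum_congr rfl fun j _ => ?_
      rw [Finset.mul_sum]
      refine Finset.sum_congr rfl fun k _ => ?_
      simp only [Pi.smul_apply, Complex.real_smul, map_mul, Complex.conj_ofReal]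
      push_cast
      ring
    simp only [hφ, this, Complex.re_ofReal_mul]
  have hψh : ∀ (s : ℝ) (t : Fin n → ℂ), ψ (s • t) = s ^ 2 * ψ t := by
    intro s t
    have : (∑ j, d j * (s • t) j) = ((s : ℝ) : ℂ) * ∑ j, d j * t j := by
      rw [Finset.mul_sum]
      refine Finset.sum_congr rfl fun j _ => ?_
      simp only [Pi.smul_apply, Complex.real_smul]
      ring
    simp only [hψ, this, Complex.normSq_mul, Complex.normSq_ofReal]
    ring
  have hφ0 : φ 0 = 0 := by
    simp [hφ, leviForm]
  have hψzero : ψ 0 = 0 := by simp [hψ]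
  -- n = 0 case
  rcases Nat.eq_zero_or_pos n with hn | hn
  · refine ⟨0, fun M _ => ⟨1, one_pos, fun t => ?_⟩⟩
    subst hn
    have ht : t = 0 := Subsingleton.elim t 0
    rw [hre M t, ht, hφ0, hψzero]
    have h0 : ‖(0 : Fin 0 → ℂ)‖ = 0 := norm_zero
    rw [h0]
    norm_num
  -- n ≥ 1
  haveI : Nonempty (Fin n) := ⟨⟨0, hn⟩⟩
  set K := Metric.sphere (0 : Fin n → ℂ) 1 with hK
  have hKc : IsCompact K := isCompact_sphere _ _
  have hKne : K.Nonempty := NormedSpace.sphere_nonempty.mpr zero_le_one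
  -- ψ is positive where φ is nonpositive on the sphere
  have hψpos : ∀ t ∈ K, φ t ≤ 0 → 0 < ψ t := by
    intro t htK hφt
    rcases (hψ0 t).lt_or_eq with h | h
    · exact h
    · exfalso
      have hS : (∑ j, d j * t j) = 0 := by
        have := Complex.normSq_eq_zero.mp h.symm
        exact this
      have ht0 : t ≠ 0 := by
        intro h0
        rw [h0] at htK
        simp [hK] at htK
      have := hstrict t hS ht0
      exact absurd (lt_of_lt_of_le this hφt) (lt_irrefl 0)
  -- find M₀ ≥ 0 with φ + 2M₀ψ > 0 on K
  obtain ⟨M₀, hM₀0, hM₀⟩ : ∃ M₀ : ℝ, 0 ≤ M₀ ∧ ∀ t ∈ K, 0 < φ t + 2 * M₀ * ψ t := by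
    set A := {t ∈ K | φ t ≤ 0} with hA
    have hAc : IsCompact A := hKc.of_isClosed_subset
      (hKc.isClosed.inter (isClosed_le hφc continuous_const)) (fun t ht => ht.1)
    rcases A.eq_empty_or_nonempty with hAe | hAne
    · refine ⟨0, le_refl 0, fun t htK => ?_⟩
      have : ¬ (φ t ≤ 0) := by
        intro hle
        exact Set.eq_empty_iff_forall_notMem.mp hAe t ⟨htK, hle⟩
      push_neg at this
      simpa using this
    · obtain ⟨t₁, ht₁A, ht₁min⟩ := hAc.exists_isMinOn hAne hψc.continuousOn
      set δ := ψ t₁ with hδ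
      have hδpos : 0 < δ := hψpos t₁ ht₁A.1 ht₁A.2
      obtain ⟨t₂, ht₂K, ht₂min⟩ := hKc.exists_isMinOn hKne hφc.continuousOn
      set m := φ t₂ with hm
      refine ⟨max 0 ((1 - m) / (2 * δ)), le_max_left _ _, fun t htK => ?_⟩
      by_cases hφt : 0 < φ t
      · have : 0 ≤ 2 * max 0 ((1 - m) / (2 * δ)) * ψ t :=
          mul_nonneg (by positivity) (hψ0 t)
        linarith
      · push_neg at hφt
        have htA : t ∈ A := ⟨htK, hφt⟩
        have h1 : δ ≤ ψ t := ht₁min htA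
        have h2 : m ≤ φ t := ht₂min htK
        have h3 : (1 - m) / (2 * δ) ≤ max 0 ((1 - m) / (2 * δ)) := le_max_right _ _
        have h4 : 1 - m ≤ 2 * max 0 ((1 - m) / (2 * δ)) * δ := by
          rw [div_le_iff₀ (by positivity)] at h3
          linarith
        have h5 : 2 * max 0 ((1 - m) / (2 * δ)) * δ ≤ 2 * max 0 ((1 - m) / (2 * δ)) * ψ t :=
          mul_le_mul_of_nonneg_left h1 (by positivity)
        linarith
  -- minimum of φ + 2M₀ψ on K
  obtain ⟨t₃, ht₃K, ht₃min⟩ := hKc.exists_isMinOn hKne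
    ((hφc.add (continuous_const.mul hψc)).continuousOn
      (f := fun t => φ t + 2 * M₀ * ψ t))
  set c := φ t₃ + 2 * M₀ * ψ t₃ with hc
  have hcpos : 0 < c := hM₀ t₃ ht₃K
  refine ⟨M₀, fun M hM => ⟨c, hcpos, fun t => ?_⟩⟩
  rw [hre M t]
  by_cases ht0 : t = 0
  · rw [ht0, hφ0, hψzero]
    simp
  · have hnt : 0 < ‖t‖ := norm_pos_iff.mpr ht0
    set u := (‖t‖⁻¹ : ℝ) • t with hu
    have huK : u ∈ K := by
      simp only [hK, Metric.mem_sphere, dist_zero_right, hu, norm_smul, norm_inv, norm_norm]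
      field_simp
    have hcu : c ≤ φ u + 2 * M₀ * ψ u := ht₃min huK
    have hMu : φ u + 2 * M₀ * ψ u ≤ φ u + 2 * M * ψ u := by
      have := hψ0 u
      nlinarith
    have hφt : ‖t‖ ^ 2 * φ u = φ t := by
      rw [hu, hφh]; field_simp
    have hψt : ‖t‖ ^ 2 * ψ u = ψ t := by
      rw [hu, hψh]; field_simp
    calc c * ‖t‖ ^ 2 ≤ (φ u + 2 * M * ψ u) * ‖t‖ ^ 2 := by nlinarith
      _ = φ t + 2 * M * ψ t := by rw [← hφt, ← hψt]; ring
end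

section
/- Let ρ be a C³ real-valued function defined near 0 in ℂⁿ with ρ(0)=0 and L_0(ρ,t) ≥ c‖t‖² for all t ∈ ℂⁿ with some c>0. Define the holomorphic polynomial g(w) = -2 ∂ρ_0(w) - Σ_{j,k} (∂²ρ/∂zⱼ∂zₖ)(0) wⱼwₖ. Then there is a neighborhood U of 0 such that for every z ∈ U with ρ(z) ≤ 0 and z ≠ 0, Re g(z) > 0; that is, g is a local strong support function at 0 for the region {ρ < 0}. -/
open Filter Asymptotics Metric

theorem taylor2aux {E : Type*} [NormedAddCommGroup E] [NormedSpace ℝ E]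
    {f : E → ℝ} {s : Set E} (hs : IsOpen s) (h0 : (0:E) ∈ s)
    (hd : ∀ x ∈ s, DifferentiableAt ℝ f x)
    (hA : HasFDerivAt (fderiv ℝ f) (fderiv ℝ (fderiv ℝ f) 0) 0)
    (hsymm : ∀ v w, fderiv ℝ (fderiv ℝ f) 0 v w = fderiv ℝ (fderiv ℝ f) 0 w v) :
    (fun z => f z - f 0 - fderiv ℝ f 0 z - (fderiv ℝ (fderiv ℝ f) 0 z z)/2)
      =o[nhds (0:E)] (fun z => ‖z‖^2) := by
  set A := fderiv ℝ (fderiv ℝ f) 0 with hAdef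
  set g : E → ℝ := fun z => f z - fderiv ℝ f 0 z - (1/2 : ℝ) • (A z z) with hg
  have hq : ∀ x : E, HasFDerivAt (fun z => A z z) (2 • A x) x := by
    intro x
    have hb : IsBoundedBilinearMap ℝ (fun p : E × E => A p.1 p.2) :=
      A.isBoundedBilinearMap
    have hprod : HasFDerivAt (fun z : E => (z, z))
        ((ContinuousLinearMap.id ℝ E).prod (ContinuousLinearMap.id ℝ E)) x :=
      HasFDerivAt.prodMk (hasFDerivAt_id x) (hasFDerivAt_id x)
    have h1 := HasFDerivAt.comp (f := fun z : E => (z, z)) x (hb.hasFDerivAt (x, x)) hprod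
    refine HasFDerivAt.congr_fderiv h1 ?_
    ext v
    simp [IsBoundedBilinearMap.deriv_apply, two_smul, hsymm x v]
  have hg' : ∀ x ∈ s, HasFDerivAt g (fderiv ℝ f x - fderiv ℝ f 0 - A x) x := by
    intro x hx
    have h1 : HasFDerivAt f (fderiv ℝ f x) x := (hd x hx).hasFDerivAt
    have h2 : HasFDerivAt (fun z : E => (fderiv ℝ f 0) z) (fderiv ℝ f 0) x :=
      (fderiv ℝ f 0).hasFDerivAt
    have h3 := (hq x).const_smul (1/2 : ℝ)
    have h4 := (h1.sub h2).sub h3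
    refine HasFDerivAt.congr_fderiv (f := g) h4 ?_
    ext v
    simp [smul_smul]
  rw [isLittleO_iff]
  intro ε εpos
  have hlo := hA.isLittleO
  rw [isLittleO_iff] at hlo
  obtain ⟨δ, δpos, hδ⟩ :=
    Metric.eventually_nhds_iff.1 ((hlo (half_pos εpos)).and (hs.eventually_mem h0))
  rw [Metric.eventually_nhds_iff]
  refine ⟨δ, δpos, fun z hz => ?_⟩
  have hzs : ∀ x ∈ closedBall (0:E) ‖z‖, x ∈ s ∧ ‖fderiv ℝ f x - fderiv ℝ f 0 - A x‖ ≤ ε/2 * ‖z‖ := by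
    intro x hx
    have hxz : ‖x‖ ≤ ‖z‖ := by simpa using mem_closedBall_zero_iff.1 hx
    have hxδ : dist x 0 < δ := by
      simp only [dist_zero_right] at hz ⊢; exact lt_of_le_of_lt hxz (by simpa using hz)
    obtain ⟨h1, h2⟩ := hδ hxδ
    refine ⟨h2, ?_⟩
    simp only [sub_zero] at h1
    calc ‖fderiv ℝ f x - fderiv ℝ f 0 - A x‖ ≤ ε/2 * ‖x‖ := by
          simpa [Real.norm_eq_abs, abs_of_nonneg (norm_nonneg x)] using h1
    _ ≤ ε/2 * ‖z‖ := by nlinarith [norm_nonneg x]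
  have key : ‖g z - g 0‖ ≤ (ε/2 * ‖z‖) * ‖z - 0‖ :=
    (convex_closedBall (0:E) ‖z‖).norm_image_sub_le_of_norm_hasFDerivWithin_le
      (f' := fun x => fderiv ℝ f x - fderiv ℝ f 0 - A x)
      (fun x hx => ((hg' x (hzs x hx).1).hasFDerivWithinAt))
      (fun x hx => (hzs x hx).2)
      (mem_closedBall_self (norm_nonneg z))
      (mem_closedBall_zero_iff.2 le_rfl)
  have heq : g z - g 0 = f z - f 0 - fderiv ℝ f 0 z - (A z z)/2 := by
    simp [hg, smul_eq_mul]; ring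
  rw [← heq]
  calc ‖g z - g 0‖ ≤ (ε/2 * ‖z‖) * ‖z - 0‖ := key
  _ ≤ ε * ‖‖z‖^2‖ := by
      rw [sub_zero]
      have := norm_nonneg z
      rw [Real.norm_eq_abs, abs_of_nonneg (by positivity)]
      nlinarith

lemma keyalg (p1 p2 p3 p4 : ℝ) (zj zk : ℂ) :
  (((((p1:ℂ) - Complex.I*p2)/2 - Complex.I*(((p3:ℂ) - Complex.I*p4)/2))/2) * zj * zk).re
  + (((((p1:ℂ) - Complex.I*p2)/2 + Complex.I*(((p3:ℂ) - Complex.I*p4)/2))/2) * zj * ((starRingEnd ℂ) zk)).re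
  = (zk.re * (zj.re * p1 + zj.im * p2) + zk.im * (zj.re * p3 + zj.im * p4)) / 2 := by
  simp [Complex.div_re, Complex.normSq, Complex.mul_re, Complex.mul_im, Complex.sub_re,
    Complex.sub_im, Complex.add_re, Complex.add_im, MonoidWithZeroHom.coe_mk]
  ring

lemma keyalg_lin (a b : ℝ) (zj : ℂ) :
    ((((a:ℂ) - Complex.I*b)/2) * zj).re = (zj.re * a + zj.im * b) / 2 := by
  simp [Complex.div_re, Complex.normSq, Complex.mul_re, Complex.mul_im, Complex.sub_re,
    Complex.sub_im, MonoidWithZeroHom.coe_mk]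
  ring

lemma csmul_decomp {n : ℕ} (w : ℂ) (v : Fin n → ℂ) :
    w • v = w.re • v + w.im • (Complex.I • v) := by
  funext i
  simp [Complex.real_smul, Complex.ext_iff]
  constructor <;> ring

lemma single_eq_smul {n : ℕ} (j : Fin n) (w : ℂ) :
    (Pi.single j w : Fin n → ℂ) = w • (Pi.single j 1 : Fin n → ℂ) := by
  rw [← Pi.single_smul]; norm_num

lemma single_I {n : ℕ} (j : Fin n) :
    (Pi.single j Complex.I : Fin n → ℂ) = Complex.I • (Pi.single j 1 : Fin n → ℂ) := by
  rw [← Pi.single_smul]; norm_num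


set_option maxHeartbeats 2000000 in
/-- Levi's construction of a local strong support function: with
`L_0(ρ,t) ≥ c‖t‖²`, the holomorphic polynomial
`g(w) = -2∂ρ_0(w) - Σ_{j,k} ∂²ρ/∂zⱼ∂zₖ(0) wⱼwₖ` has `Re g > 0` on `{ρ ≤ 0}\{0}` near `0`. -/
theorem stmt_3 (n : ℕ) (V : Set (Fin n → ℂ)) (hV : IsOpen V) (h0V : (0 : Fin n → ℂ) ∈ V)
    (ρ : (Fin n → ℂ) → ℝ) (hρ : ContDiffOn ℝ 3 ρ V) (hρ0 : ρ 0 = 0)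
    (c : ℝ) (hc : 0 < c)
    (hLevi : ∀ t : Fin n → ℂ, c * ‖t‖ ^ 2 ≤ (leviForm ρ 0 t).re) :
    ∃ U ∈ nhds (0 : Fin n → ℂ), ∀ z ∈ U, ρ z ≤ 0 → z ≠ 0 →
      0 < ((-2 * ∑ j, wirtingerD (fun w => ((ρ w : ℂ))) 0 j * z j)
        - ∑ j, ∑ k,
            wirtingerD (fun q => wirtingerD (fun w => ((ρ w : ℂ))) q j) 0 k * z j * z k).re := by
  classical
  set f : (Fin n → ℂ) → ℂ := fun w => ((ρ w : ℂ)) with hfdef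
  set A := fderiv ℝ (fderiv ℝ ρ) 0 with hAdef
  set e : Fin n → (Fin n → ℂ) := fun j => Pi.single j 1 with hedef
  have hVnhds : V ∈ nhds (0 : Fin n → ℂ) := hV.mem_nhds h0V
  have hC3 : ∀ x ∈ V, ContDiffAt ℝ 3 ρ x := fun x hx => hρ.contDiffAt (hV.mem_nhds hx)
  have hd : ∀ x ∈ V, DifferentiableAt ℝ ρ x :=
    fun x hx => (hC3 x hx).differentiableAt (by norm_num)
  have hA0 : HasFDerivAt (fderiv ℝ ρ) A 0 := by
    have := ((hC3 0 h0V).fderiv_right (m := 1) (by norm_num)).differentiableAt one_ne_zero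
    exact this.hasFDerivAt
  have hsymm : ∀ v w, A v w = A w v := (hC3 0 h0V).isSymmSndFDerivAt (by norm_num)
  -- first derivative of complexified function
  have W1 : ∀ x ∈ V, ∀ v, fderiv ℝ f x v = ((fderiv ℝ ρ x v : ℝ) : ℂ) := by
    intro x hx v
    have h1 : HasFDerivAt f (Complex.ofRealCLM.comp (fderiv ℝ ρ x)) x :=
      Complex.ofRealCLM.hasFDerivAt.comp x (hd x hx).hasFDerivAt
    rw [h1.fderiv]; simp
  have W1' : ∀ x ∈ V, ∀ j, wirtingerD f x j =
      (((fderiv ℝ ρ x (e j) : ℝ) : ℂ)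
        - Complex.I * ((fderiv ℝ ρ x (Complex.I • e j) : ℝ) : ℂ)) / 2 := by
    intro x hx j
    rw [wirtingerD, W1 x hx, single_I j, W1 x hx]
  -- derivative of the Wirtinger derivative map
  have hWD : ∀ (j : Fin n) (v : Fin n → ℂ), fderiv ℝ (fun q => wirtingerD f q j) 0 v
      = (((A v (e j) : ℝ) : ℂ) - Complex.I * ((A v (Complex.I • e j) : ℝ) : ℂ)) / 2 := by
    intro j v
    have hc1 : HasFDerivAt (fun q : Fin n → ℂ => fderiv ℝ ρ q (e j))
        ((ContinuousLinearMap.apply ℝ ℝ (e j)).comp A) 0 :=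
      HasFDerivAt.comp (f := fderiv ℝ ρ) 0
        ((ContinuousLinearMap.apply ℝ ℝ (e j)).hasFDerivAt) hA0
    have hc2 : HasFDerivAt (fun q : Fin n → ℂ => fderiv ℝ ρ q (Complex.I • e j))
        ((ContinuousLinearMap.apply ℝ ℝ (Complex.I • e j)).comp A) 0 :=
      HasFDerivAt.comp (f := fderiv ℝ ρ) 0
        ((ContinuousLinearMap.apply ℝ ℝ (Complex.I • e j)).hasFDerivAt) hA0
    have hC1 := Complex.ofRealCLM.hasFDerivAt.comp 0 hc1
    have hC2 := Complex.ofRealCLM.hasFDerivAt.comp 0 hc2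
    have hI := hC2.const_mul Complex.I
    have hsub := hC1.sub hI
    have hhalf := hsub.const_smul (1/2 : ℝ)
    have hfun : (fun q : Fin n → ℂ => (1/2:ℝ) • (((fderiv ℝ ρ q (e j) : ℝ):ℂ)
          - Complex.I * ((fderiv ℝ ρ q (Complex.I • e j) : ℝ):ℂ)))
        =ᶠ[nhds (0 : Fin n → ℂ)] (fun q => wirtingerD f q j) := by
      filter_upwards [hVnhds] with x hx
      rw [W1' x hx j, Complex.real_smul]; push_cast; ring
    have hfd := (hhalf.congr_of_eventuallyEq hfun.symm).fderiv
    rw [hfd]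
    simp only [ContinuousLinearMap.smul_apply, ContinuousLinearMap.sub_apply,
      ContinuousLinearMap.comp_apply, ContinuousLinearMap.apply_apply,
      Complex.ofRealCLM_apply, ContinuousLinearMap.coe_smul', Pi.smul_apply, smul_eq_mul]
    rw [Complex.real_smul]; push_cast; ring
  -- value of second Wirtinger derivatives
  have hwd2 : ∀ j k, wirtingerD (fun q => wirtingerD f q j) 0 k
      = ((((A (e k) (e j) : ℝ):ℂ) - Complex.I*((A (e k) (Complex.I • e j) : ℝ):ℂ))/2
        - Complex.I*((((A (Complex.I • e k) (e j) : ℝ):ℂ)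
            - Complex.I*((A (Complex.I • e k) (Complex.I • e j) : ℝ):ℂ))/2))/2 := by
    intro j k
    rw [wirtingerD, hWD j, single_I k, hWD j]
  have hwdbar2 : ∀ j k, wirtingerDBar (fun q => wirtingerD f q j) 0 k
      = ((((A (e k) (e j) : ℝ):ℂ) - Complex.I*((A (e k) (Complex.I • e j) : ℝ):ℂ))/2
        + Complex.I*((((A (Complex.I • e k) (e j) : ℝ):ℂ)
            - Complex.I*((A (Complex.I • e k) (Complex.I • e j) : ℝ):ℂ))/2))/2 := by
    intro j k
    rw [wirtingerDBar, hWD j, single_I k, hWD j]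
  -- decomposition of singles
  have hdec : ∀ (j : Fin n) (w : ℂ),
      (Pi.single j w : Fin n → ℂ) = w.re • e j + w.im • (Complex.I • e j) := by
    intro j w
    rw [single_eq_smul, csmul_decomp]
  -- linear part
  have hlin : ∀ z : Fin n → ℂ, (∑ j, wirtingerD f 0 j * z j).re = (fderiv ℝ ρ 0 z) / 2 := by
    intro z
    have hterm : ∀ j, (wirtingerD f 0 j * z j).re
        = (fderiv ℝ ρ 0 (Pi.single j (z j))) / 2 := by
      intro j
      rw [W1' 0 h0V j, hdec j (z j), map_add, (fderiv ℝ ρ 0).map_smul, (fderiv ℝ ρ 0).map_smul]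
      simpa [smul_eq_mul] using keyalg_lin (fderiv ℝ ρ 0 (e j))
        (fderiv ℝ ρ 0 (Complex.I • e j)) (z j)
    rw [Complex.re_sum]
    rw [Finset.sum_congr rfl (fun j _ => hterm j), ← Finset.sum_div, ← map_sum,
      Finset.univ_sum_single]
  -- quadratic part
  have hquad : ∀ z : Fin n → ℂ,
      (∑ j, ∑ k, wirtingerD (fun q => wirtingerD f q j) 0 k * z j * z k).re
        + (leviForm ρ 0 z).re = (A z z) / 2 := by
    intro z
    have hterm : ∀ j k,
        (wirtingerD (fun q => wirtingerD f q j) 0 k * z j * z k).re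
          + (wirtingerDBar (fun q => wirtingerD f q j) 0 k * z j * (starRingEnd ℂ) (z k)).re
        = (A (Pi.single k (z k)) (Pi.single j (z j))) / 2 := by
      intro j k
      rw [hwd2 j k, hwdbar2 j k]
      have hrhs : A (Pi.single k (z k)) (Pi.single j (z j))
          = (z k).re * ((z j).re * A (e k) (e j) + (z j).im * A (e k) (Complex.I • e j))
            + (z k).im * ((z j).re * A (Complex.I • e k) (e j)
              + (z j).im * A (Complex.I • e k) (Complex.I • e j)) := by
        rw [hdec k (z k), hdec j (z j)]
        simp [map_add, map_smul, ContinuousLinearMap.add_apply,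
          ContinuousLinearMap.smul_apply, smul_eq_mul]
        ring
      rw [hrhs]
      exact keyalg _ _ _ _ (z j) (z k)
    have hL : leviForm ρ 0 z
        = ∑ j, ∑ k, wirtingerDBar (fun q => wirtingerD f q j) 0 k * z j * (starRingEnd ℂ) (z k) := by
      rw [leviForm]
    rw [hL, Complex.re_sum, Complex.re_sum, ← Finset.sum_add_distrib]
    have : ∀ j : Fin n,
        (∑ k, wirtingerD (fun q => wirtingerD f q j) 0 k * z j * z k).re
          + (∑ k, wirtingerDBar (fun q => wirtingerD f q j) 0 k * z j * (starRingEnd ℂ) (z k)).re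
        = (A z (Pi.single j (z j))) / 2 := by
      intro j
      rw [Complex.re_sum, Complex.re_sum, ← Finset.sum_add_distrib]
      rw [Finset.sum_congr rfl (fun k _ => hterm j k), ← Finset.sum_div]
      congr 1
      rw [← ContinuousLinearMap.sum_apply, ← map_sum, Finset.univ_sum_single]
    rw [Finset.sum_congr rfl (fun j _ => this j), ← Finset.sum_div, ← map_sum,
      Finset.univ_sum_single]
  -- Taylor
  have htay := taylor2aux hV h0V hd hA0 hsymm
  have hev : ∀ᶠ z in nhds (0 : Fin n → ℂ),
      |ρ z - ρ 0 - fderiv ℝ ρ 0 z - (A z z)/2| ≤ c/2 * ‖z‖^2 := by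
    filter_upwards [htay.def (half_pos hc)] with z hz
    rw [Real.norm_eq_abs, Real.norm_eq_abs, abs_of_nonneg (by positivity : (0:ℝ) ≤ ‖z‖^2)] at hz
    exact hz
  refine ⟨_, eventually_iff.mp hev, fun z hz hρz hz0 => ?_⟩
  have hzpos : (0:ℝ) < ‖z‖ := norm_pos_iff.mpr hz0
  have herr : |ρ z - ρ 0 - fderiv ℝ ρ 0 z - (A z z)/2| ≤ c/2 * ‖z‖^2 := hz
  have hLz := hLevi z
  have hre : ((-2 * ∑ j, wirtingerD f 0 j * z j)
        - ∑ j, ∑ k, wirtingerD (fun q => wirtingerD f q j) 0 k * z j * z k).re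
      = (leviForm ρ 0 z).re - fderiv ℝ ρ 0 z - (A z z)/2 := by
    have h2 := hquad z
    have h1 := hlin z
    have hexp : ((-2 * ∑ j, wirtingerD f 0 j * z j)
          - ∑ j, ∑ k, wirtingerD (fun q => wirtingerD f q j) 0 k * z j * z k).re
        = -2 * (∑ j, wirtingerD f 0 j * z j).re
          - (∑ j, ∑ k, wirtingerD (fun q => wirtingerD f q j) 0 k * z j * z k).re := by
      simp
    rw [hexp, h1]
    linarith
  rw [hre]
  have habs := abs_le.1 herr
  rw [hρ0] at habs
  nlinarith [habs.1, habs.2, mul_pos hc (pow_pos hzpos 2), hρz, hLz]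
end

section
/- For every t with 0 < t ≤ 4/3 and every ε with 0 < ε < 1 - 3t/4, there exists c > 0 such that for all z ∈ ℂ, |z|⁴ + t|z|² Re(z²) + (t/(4(1-ε))) Re(z⁴) ≥ c|z|⁴. -/
/-- For `0 < t ≤ 4/3` and `0 < ε < 1 - 3t/4` there is `c > 0` with
`|z|⁴ + t|z|²Re(z²) + (t/(4(1-ε)))Re(z⁴) ≥ c|z|⁴` for all `z ∈ ℂ`. -/
theorem stmt_7 (t ε : ℝ) (ht : 0 < t) (ht' : t ≤ 4/3) (hε : 0 < ε) (hε' : ε < 1 - 3*t/4) :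
    ∃ c > 0, ∀ z : ℂ, c * ‖z‖ ^ 4 ≤
      ‖z‖ ^ 4 + t * ‖z‖ ^ 2 * (z ^ 2).re
        + t / (4 * (1 - ε)) * (z ^ 4).re := by
  have ha : (0:ℝ) < 1 - ε := by linarith
  set a := 1 - ε with hadef
  have ha1 : 3*t/4 < a := by simp [hadef]; linarith
  have ha2 : a < 1 := by simp [hadef]; linarith
  have h4a : (0:ℝ) < 4*a := by linarith
  set s := t / (4*a) with hsdef
  have hs : 0 < s := div_pos ht h4a
  have hts : t = 4*a*s := by rw [hsdef]; field_simp
  clear_value a s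
  have key : 0 < 4*a - t - 2*t*a^2 := by
    nlinarith [mul_pos (mul_pos ht (sub_pos.2 ha1)) (sub_pos.2 ha2),
      mul_pos ht (mul_pos (sub_pos.2 ha1) (sub_pos.2 ha2)), sq_nonneg (a-1), sq_nonneg a]
  refine ⟨1 - s - t*a/2, ?_, ?_⟩
  · have : (1 - s - t*a/2) = (4*a - t - 2*t*a^2)/(4*a) := by
      rw [hsdef]; field_simp; ring
    rw [this]
    exact div_pos key h4a
  · intro z
    have hx : (‖z‖)^2 = z.re^2 + z.im^2 := by
      rw [Complex.sq_norm, Complex.normSq_apply]; ring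
    have h4 : (‖z‖)^4 = (z.re^2 + z.im^2)^2 := by
      rw [show (4:ℕ) = 2*2 from rfl, pow_mul, hx]
    have hre2 : (z^2).re = z.re^2 - z.im^2 := by
      simp [pow_two, Complex.mul_re]
    have hre4 : (z^4).re = z.re^4 - 6*z.re^2*z.im^2 + z.im^4 := by
      simp [pow_succ, Complex.mul_re, Complex.mul_im]; ring
    rw [h4, hx, hre2, hre4, hts]
    nlinarith [mul_nonneg hs.le (sq_nonneg (z.re^2 - z.im^2 + a*(z.re^2 + z.im^2))),
      sq_nonneg (z.re^2 + z.im^2)]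
end

section
/- Let t > 1 and P(z) = |z|⁶ + t|z|² Re(z⁴). Then P takes strictly negative values in every neighborhood of 0 in ℂ, and there is no holomorphic function h on a neighborhood of 0 ∈ ℂ with h(0)=0, h(iz) = h(z) identically, and Re h(z) + P(z) + |z h(z)|² ≥ 0 for all z near 0. -/
/-- for `t > 1`, `P(z) = |z|⁶ + t|z|²Re(z⁴)` takes negative values in every
neighborhood of `0`, and there is no holomorphic `h` near `0` with `h(0)=0`, `h(iz)=h(z)`,
and `Re h(z) + P(z) + |z h(z)|² ≥ 0` near `0`. -/
theorem stmt_10 (t : ℝ) (ht : 1 < t) :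
    (∀ ε > 0, ∃ z : ℂ, ‖z‖ < ε ∧
      ‖z‖ ^ 6 + t * ‖z‖ ^ 2 * (z ^ 4).re < 0) ∧
    ¬ ∃ (U : Set ℂ) (h : ℂ → ℂ), U ∈ nhds (0 : ℂ) ∧ DifferentiableOn ℂ h U ∧ h 0 = 0 ∧
      (∀ z ∈ U, Complex.I * z ∈ U → h (Complex.I * z) = h z) ∧
      ∀ z ∈ U, 0 ≤ (h z).re + (‖z‖ ^ 6 + t * ‖z‖ ^ 2 * (z ^ 4).re)
        + ‖z * h z‖ ^ 2 := by
  classical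
  -- the special direction ζ with ζ⁴ = -1, |ζ| = 1
  set ζ : ℂ := Complex.exp ((Real.pi / 4 : ℝ) * Complex.I) with hζdef
  have hζabs : ‖ζ‖ = 1 := by
    rw [hζdef, Complex.norm_exp]; simp
  have hζ4 : ζ ^ 4 = -1 := by
    rw [hζdef, ← Complex.exp_nat_mul]
    rw [show ((4 : ℕ) : ℂ) * (((Real.pi / 4 : ℝ) : ℂ) * Complex.I)
        = (Real.pi : ℂ) * Complex.I by push_cast; ring]
    exact Complex.exp_pi_mul_I
  have hP : ∀ r : ℝ, 0 < r → ‖(r : ℂ) * ζ‖ = r ∧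
      ‖(r : ℂ) * ζ‖ ^ 6 + t * ‖(r : ℂ) * ζ‖ ^ 2
        * ((((r : ℂ) * ζ)) ^ 4).re = (1 - t) * r ^ 6 := by
    intro r hr
    have habs : ‖(r : ℂ) * ζ‖ = r := by
      rw [norm_mul, hζabs, Complex.norm_real, Real.norm_eq_abs, abs_of_pos hr, mul_one]
    refine ⟨habs, ?_⟩
    have h4 : (((r : ℂ) * ζ)) ^ 4 = -(r : ℂ) ^ 4 := by rw [mul_pow, hζ4]; ring
    have hre : ((((r : ℂ) * ζ)) ^ 4).re = -(r ^ 4) := by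
      rw [h4, ← Complex.ofReal_pow, ← Complex.ofReal_neg, Complex.ofReal_re]
    rw [habs, hre]; ring
  have part1 : ∀ ε > 0, ∃ z : ℂ, ‖z‖ < ε ∧
      ‖z‖ ^ 6 + t * ‖z‖ ^ 2 * (z ^ 4).re < 0 := by
    intro ε hε
    obtain ⟨habs, hval⟩ := hP (ε / 2) (by linarith)
    refine ⟨((ε / 2 : ℝ) : ℂ) * ζ, by rw [habs]; linarith, ?_⟩
    rw [hval]
    have h6 : (0 : ℝ) < (ε / 2) ^ 6 := by positivity
    nlinarith
  refine ⟨part1, ?_⟩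
  rintro ⟨U, h, hU, hdiff, h0, hsym, hineq⟩
  have hUev : ∀ᶠ z in nhds (0 : ℂ), z ∈ U := hU
  have hA : AnalyticAt ℂ h 0 := hdiff.analyticAt hU
  have htendI : Filter.Tendsto (fun z : ℂ => Complex.I * z) (nhds 0) (nhds 0) := by
    have := (continuous_mul_left Complex.I).tendsto 0
    simpa using this
  rcases eq_or_ne (analyticOrderAt h 0) ⊤ with hord | hord
  · -- h vanishes identically near 0, so P ≥ 0 near 0, contradiction
    have hz0 := analyticOrderAt_eq_top.mp hord
    have hPnn : ∀ᶠ z in nhds (0 : ℂ),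
        0 ≤ ‖z‖ ^ 6 + t * ‖z‖ ^ 2 * (z ^ 4).re := by
      filter_upwards [hz0, hUev] with z hz1 hz2
      have := hineq z hz2
      rw [hz1] at this
      simpa using this
    obtain ⟨δ, hδ, hδsub⟩ := Metric.eventually_nhds_iff.mp hPnn
    obtain ⟨z, hz1, hz2⟩ := part1 δ hδ
    have := hδsub (y := z) (by simpa [Complex.dist_eq] using hz1)
    linarith
  · obtain ⟨n, hn⟩ := WithTop.ne_top_iff_exists.mp hord
    obtain ⟨g, hg, hg0, hev⟩ := (hA.analyticOrderAt_eq_natCast (n := n)).mp hn.symm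
    have hev' : ∀ᶠ z in nhds (0 : ℂ), h z = z ^ n * g z := by
      filter_upwards [hev] with z hz
      simpa using hz
    -- n ≠ 0
    have hn0 : n ≠ 0 := by
      intro hcon
      have := hev'.self_of_nhds
      rw [h0, hcon, pow_zero, one_mul] at this
      exact hg0 this.symm
    -- symmetry eventually
    have hIU : ∀ᶠ z in nhds (0 : ℂ), Complex.I * z ∈ U := htendI.eventually hUev
    have hevI : ∀ᶠ z in nhds (0 : ℂ), h (Complex.I * z) = (Complex.I * z) ^ n
        * g (Complex.I * z) := htendI.eventually hev'
    have hkey : ∀ᶠ z in nhds (0 : ℂ), z ≠ 0 →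
        Complex.I ^ n * g (Complex.I * z) = g z := by
      filter_upwards [hUev, hIU, hev', hevI] with z h1 h2 h3 h4 hz
      have e1 : (Complex.I * z) ^ n * g (Complex.I * z) = z ^ n * g z := by
        rw [← h4, ← h3]; exact hsym z h1 h2
      have e2 : z ^ n * (Complex.I ^ n * g (Complex.I * z)) = z ^ n * g z := by
        rw [← e1, mul_pow]; ring
      exact mul_left_cancel₀ (pow_ne_zero n hz) e2
    have hfun : ∀ᶠ z in nhdsWithin (0 : ℂ) {(0:ℂ)}ᶜ,
        Complex.I ^ n * g (Complex.I * z) = g z := by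
      filter_upwards [eventually_nhdsWithin_of_eventually_nhds hkey,
        self_mem_nhdsWithin] with z hz hz0
      exact hz hz0
    have hgc : Filter.Tendsto g (nhds (0 : ℂ)) (nhds (g 0)) := hg.continuousAt.tendsto
    have l1 : Filter.Tendsto (fun z : ℂ => Complex.I ^ n * g (Complex.I * z))
        (nhdsWithin (0 : ℂ) {(0:ℂ)}ᶜ) (nhds (Complex.I ^ n * g 0)) := by
      apply Filter.Tendsto.mono_left _ nhdsWithin_le_nhds
      exact (hgc.comp htendI).const_mul _
    have l2 : Filter.Tendsto g (nhdsWithin (0 : ℂ) {(0:ℂ)}ᶜ) (nhds (g 0)) :=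
      hgc.mono_left nhdsWithin_le_nhds
    have hig : Complex.I ^ n * g 0 = g 0 :=
      tendsto_nhds_unique ((l1.congr' hfun)) l2
    have hI1 : Complex.I ^ n = 1 :=
      mul_right_cancel₀ hg0 (by rw [hig, one_mul])
    -- 4 ∣ n
    have hmod : n % 4 = 0 := by
      have hd : Complex.I ^ (n % 4) = 1 := by
        rw [← hI1]
        conv_rhs => rw [← Nat.div_add_mod n 4]
        rw [pow_add, pow_mul, Complex.I_pow_four, one_pow, one_mul]
      have hcases : n % 4 = 0 ∨ n % 4 = 1 ∨ n % 4 = 2 ∨ n % 4 = 3 := by omega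
      rcases hcases with hc | hc | hc | hc
      · exact hc
      · rw [hc, pow_one] at hd
        exact absurd (congrArg Complex.im hd) (by norm_num)
      · rw [hc, sq, Complex.I_mul_I] at hd
        exact absurd (congrArg Complex.re hd) (by norm_num)
      · rw [hc, pow_succ, sq, Complex.I_mul_I, neg_one_mul] at hd
        exact absurd (congrArg Complex.im hd) (by norm_num)
    have h48 : n = 4 ∨ 8 ≤ n := by omega
    set c : ℂ := g 0 with hcdef
    have hcabs : 0 < ‖c‖ := by
      simpa [norm_pos_iff] using hg0
    rcases h48 with h4 | h8
    · -- n = 4 : choose ω with ω⁴ = -conj c / |c|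
      subst h4
      set a : ℂ := -(starRingEnd ℂ c) / ((‖c‖ : ℝ) : ℂ) with hadef
      have hca : ((‖c‖ : ℝ) : ℂ) ≠ 0 := by
        simpa using hcabs.ne'
      have haabs : ‖a‖ = 1 := by
        rw [hadef, norm_div, norm_neg, Complex.norm_conj, Complex.norm_real, Real.norm_eq_abs,
          abs_of_pos hcabs, div_self hcabs.ne']
      have hac : a * c = -((‖c‖ : ℝ) : ℂ) := by
        rw [hadef]
        field_simp
        rw [mul_comm, Complex.mul_conj, Complex.normSq_eq_norm_sq]
        push_cast
        ring
      obtain ⟨ω, hω4⟩ := IsAlgClosed.exists_pow_nat_eq a (n := 4) (by norm_num)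
      have hωabs : ‖ω‖ = 1 := by
        have h4' : ‖ω‖ ^ 4 = 1 := by rw [← norm_pow, hω4, haabs]
        nlinarith [norm_nonneg ω, sq_nonneg (‖ω‖ - 1),
          sq_nonneg (‖ω‖ + 1), sq_nonneg (‖ω‖ ^ 2 - 1)]
      -- eventual bounds from continuity of g at 0
      have hcont1 : Filter.Tendsto (fun z : ℂ => (a * g z).re) (nhds 0)
          (nhds ((a * c).re)) := by
        exact (Complex.continuous_re.tendsto _).comp (hgc.const_mul a)
      have hre_ac : (a * c).re = -(‖c‖) := by
        rw [hac]; simp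
      have hev1 : ∀ᶠ z in nhds (0 : ℂ), (a * g z).re < -(‖c‖) / 2 := by
        apply hcont1.eventually_lt_const
        rw [hre_ac]; linarith
      have hev2 : ∀ᶠ z in nhds (0 : ℂ), ‖g z‖ < 2 * ‖c‖ := by
        have htc : Filter.Tendsto (fun z : ℂ => ‖g z‖) (nhds 0)
            (nhds (‖c‖)) := (continuous_norm.tendsto c).comp hgc
        exact htc.eventually_lt_const (by linarith)
      -- pull back along the ray s ↦ s • ω
      have htray : Filter.Tendsto (fun s : ℝ => (s : ℂ) * ω) (nhdsWithin 0 (Set.Ioi 0))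
          (nhds 0) := by
        apply Filter.Tendsto.mono_left _ nhdsWithin_le_nhds
        have : Filter.Tendsto (fun s : ℝ => (s : ℂ) * ω) (nhds 0) (nhds ((0 : ℂ) * ω)) :=
          (Complex.continuous_ofReal.tendsto 0).mul_const ω
        simpa using this
      have hsmall : ∀ᶠ s : ℝ in nhdsWithin 0 (Set.Ioi 0),
          (1 + t) * s ^ 2 < ‖c‖ / 4 ∧ 4 * ‖c‖ ^ 2 * s ^ 6
            < ‖c‖ / 4 := by
        apply eventually_nhdsWithin_of_eventually_nhds
        have e1 : ∀ᶠ s : ℝ in nhds 0, (1 + t) * s ^ 2 < ‖c‖ / 4 := by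
          apply Filter.Tendsto.eventually_lt_const (by positivity)
          have : Filter.Tendsto (fun s : ℝ => (1 + t) * s ^ 2) (nhds 0)
              (nhds ((1 + t) * (0:ℝ) ^ 2)) :=
            ((continuous_pow 2).tendsto (0:ℝ)).const_mul _
          simpa using this
        have e2 : ∀ᶠ s : ℝ in nhds 0, 4 * ‖c‖ ^ 2 * s ^ 6
            < ‖c‖ / 4 := by
          apply Filter.Tendsto.eventually_lt_const (by positivity)
          have : Filter.Tendsto (fun s : ℝ => 4 * ‖c‖ ^ 2 * s ^ 6) (nhds 0)
              (nhds (4 * ‖c‖ ^ 2 * (0:ℝ) ^ 6)) :=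
            ((continuous_pow 6).tendsto (0:ℝ)).const_mul _
          simpa using this
        filter_upwards [e1, e2] with s hs1 hs2 using ⟨hs1, hs2⟩
      have hall : ∀ᶠ s : ℝ in nhdsWithin 0 (Set.Ioi 0),
          ((s : ℂ) * ω ∈ U ∧ h ((s : ℂ) * ω) = ((s : ℂ) * ω) ^ 4 * g ((s : ℂ) * ω) ∧
            (a * g ((s : ℂ) * ω)).re < -(‖c‖) / 2 ∧
            ‖g ((s : ℂ) * ω)‖ < 2 * ‖c‖) ∧
          ((1 + t) * s ^ 2 < ‖c‖ / 4 ∧ 4 * ‖c‖ ^ 2 * s ^ 6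
            < ‖c‖ / 4) ∧ 0 < s := by
        filter_upwards [htray.eventually (hUev.and (hev'.and (hev1.and hev2))),
          hsmall, self_mem_nhdsWithin] with s h1 h2 h3
        exact ⟨h1, h2, h3⟩
      obtain ⟨s, ⟨hzU, hzh, hzre, hzg⟩, ⟨hs1, hs2⟩, hs⟩ := hall.exists
      set z : ℂ := (s : ℂ) * ω with hzdef
      have hzabs : ‖z‖ = s := by
        rw [hzdef, norm_mul, hωabs, Complex.norm_real, Real.norm_eq_abs, abs_of_pos hs, mul_one]
      have hz4 : z ^ 4 = ((s ^ 4 : ℝ) : ℂ) * a := by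
        rw [hzdef, mul_pow, hω4]; push_cast; ring
      have hre4 : (z ^ 4).re = s ^ 4 * a.re := by
        rw [hz4, Complex.re_ofReal_mul]
      have hhz : h z = ((s ^ 4 : ℝ) : ℂ) * (a * g z) := by
        rw [hzh, hz4]; ring
      have hrehz : (h z).re = s ^ 4 * (a * g z).re := by
        rw [hhz, Complex.re_ofReal_mul]
      have hare : a.re ≤ 1 := by
        calc a.re ≤ ‖a‖ := Complex.re_le_norm a
        _ = 1 := haabs
      have habsh : ‖h z‖ ≤ s ^ 4 * (2 * ‖c‖) := by
        rw [hhz, norm_mul, Complex.norm_real, Real.norm_eq_abs, abs_of_pos (by positivity), norm_mul, haabs,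
          one_mul]
        exact mul_le_mul_of_nonneg_left hzg.le (by positivity)
      have hineqz := hineq z hzU
      rw [hzabs, hrehz, hre4] at hineqz
      have habs2 : ‖z * h z‖ ^ 2 ≤ s ^ 2 * (s ^ 4 * (2 * ‖c‖)) ^ 2 := by
        rw [norm_mul, hzabs, mul_pow]
        have hsq : ‖h z‖ ^ 2 ≤ (s ^ 4 * (2 * ‖c‖)) ^ 2 := by
          rw [sq, sq]; exact mul_self_le_mul_self (norm_nonneg _) habsh
        exact mul_le_mul_of_nonneg_left hsq (by positivity)
      have hs4 : (0 : ℝ) < s ^ 4 := by positivity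
      nlinarith [mul_le_mul_of_nonneg_left hare (le_of_lt (mul_pos (by linarith : (0:ℝ) < t)
        (by positivity : (0:ℝ) < s ^ 2 * s ^ 4))), sq_nonneg s,
        mul_lt_mul_of_pos_left hzre hs4]
    · -- n ≥ 8 : use the direction ζ
      have hev2 : ∀ᶠ z in nhds (0 : ℂ), ‖g z‖ < 2 * ‖c‖ := by
        have htc : Filter.Tendsto (fun z : ℂ => ‖g z‖) (nhds 0)
            (nhds (‖c‖)) := (continuous_norm.tendsto c).comp hgc
        exact htc.eventually_lt_const (by linarith)
      have htray : Filter.Tendsto (fun s : ℝ => (s : ℂ) * ζ) (nhdsWithin 0 (Set.Ioi 0))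
          (nhds 0) := by
        apply Filter.Tendsto.mono_left _ nhdsWithin_le_nhds
        have : Filter.Tendsto (fun s : ℝ => (s : ℂ) * ζ) (nhds 0) (nhds ((0 : ℂ) * ζ)) :=
          (Complex.continuous_ofReal.tendsto 0).mul_const ζ
        simpa using this
      have hsmall : ∀ᶠ s : ℝ in nhdsWithin 0 (Set.Ioi 0),
          (2 * ‖c‖ + 4 * ‖c‖ ^ 2) * s ^ 2 < t - 1 ∧ s ≤ 1 := by
        apply eventually_nhdsWithin_of_eventually_nhds
        have e1 : ∀ᶠ s : ℝ in nhds 0,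
            (2 * ‖c‖ + 4 * ‖c‖ ^ 2) * s ^ 2 < t - 1 := by
          have hT : Filter.Tendsto
              (fun s : ℝ => (2 * ‖c‖ + 4 * ‖c‖ ^ 2) * s ^ 2) (nhds 0)
              (nhds ((2 * ‖c‖ + 4 * ‖c‖ ^ 2) * (0:ℝ) ^ 2)) :=
            ((continuous_pow 2).tendsto (0:ℝ)).const_mul _
          have hT' : Filter.Tendsto
              (fun s : ℝ => (2 * ‖c‖ + 4 * ‖c‖ ^ 2) * s ^ 2) (nhds 0)
              (nhds 0) := by simpa using hT
          exact hT'.eventually_lt_const (by linarith)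
        have e2 : ∀ᶠ s : ℝ in nhds 0, s ≤ 1 := by
          have : ∀ᶠ s : ℝ in nhds 0, s < 1 :=
            Filter.Tendsto.eventually_lt_const (by norm_num) Filter.tendsto_id
          filter_upwards [this] with s hs using hs.le
        filter_upwards [e1, e2] with s hs1 hs2 using ⟨hs1, hs2⟩
      have hall : ∀ᶠ s : ℝ in nhdsWithin 0 (Set.Ioi 0),
          ((s : ℂ) * ζ ∈ U ∧ h ((s : ℂ) * ζ) = ((s : ℂ) * ζ) ^ n * g ((s : ℂ) * ζ) ∧
            ‖g ((s : ℂ) * ζ)‖ < 2 * ‖c‖) ∧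
          ((2 * ‖c‖ + 4 * ‖c‖ ^ 2) * s ^ 2 < t - 1 ∧ s ≤ 1) ∧
            0 < s := by
        filter_upwards [htray.eventually (hUev.and (hev'.and hev2)), hsmall,
          self_mem_nhdsWithin] with s h1 h2 h3
        exact ⟨h1, h2, h3⟩
      obtain ⟨s, ⟨hzU, hzh, hzg⟩, ⟨hs1, hs2⟩, hs⟩ := hall.exists
      set z : ℂ := (s : ℂ) * ζ with hzdef
      have hzabs : ‖z‖ = s := by
        rw [hzdef, norm_mul, hζabs, Complex.norm_real, Real.norm_eq_abs, abs_of_pos hs, mul_one]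
      have hre4 : (z ^ 4).re = -(s ^ 4) := by
        have h4 : z ^ 4 = -(s : ℂ) ^ 4 := by rw [hzdef, mul_pow, hζ4]; ring
        rw [h4, ← Complex.ofReal_pow, ← Complex.ofReal_neg, Complex.ofReal_re]
      have habsh : ‖h z‖ ≤ s ^ n * (2 * ‖c‖) := by
        rw [hzh, norm_mul, norm_pow, hzabs]
        exact mul_le_mul_of_nonneg_left hzg.le (by positivity)
      have hpow1 : s ^ n ≤ s ^ 8 := pow_le_pow_of_le_one hs.le hs2 h8
      have hpow2 : s ^ (2 * n + 2) ≤ s ^ 8 := pow_le_pow_of_le_one hs.le hs2 (by omega)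
      have hineqz := hineq z hzU
      rw [hzabs, hre4] at hineqz
      have hreh : (h z).re ≤ s ^ n * (2 * ‖c‖) :=
        (Complex.re_le_norm (h z)).trans habsh
      have habs2 : ‖z * h z‖ ^ 2 ≤ s ^ (2 * n + 2) * (4 * ‖c‖ ^ 2) := by
        rw [norm_mul, hzabs, mul_pow]
        have h2 : ‖h z‖ ^ 2 ≤ (s ^ n * (2 * ‖c‖)) ^ 2 := by
          rw [sq, sq]; exact mul_self_le_mul_self (norm_nonneg _) habsh
        calc s ^ 2 * ‖h z‖ ^ 2 ≤ s ^ 2 * (s ^ n * (2 * ‖c‖)) ^ 2 :=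
            mul_le_mul_of_nonneg_left h2 (by positivity)
        _ = s ^ (2 * n + 2) * (4 * ‖c‖ ^ 2) := by ring
      -- combine
      have hs6 : (0 : ℝ) < s ^ 6 := by positivity
      have key : 0 ≤ s ^ 8 * (2 * ‖c‖) + (1 - t) * s ^ 6
          + s ^ 8 * (4 * ‖c‖ ^ 2) := by
        have b1 : s ^ n * (2 * ‖c‖) ≤ s ^ 8 * (2 * ‖c‖) :=
          mul_le_mul_of_nonneg_right hpow1 (by positivity)
        have b2 : s ^ (2 * n + 2) * (4 * ‖c‖ ^ 2)
            ≤ s ^ 8 * (4 * ‖c‖ ^ 2) :=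
          mul_le_mul_of_nonneg_right hpow2 (by positivity)
        have e : t * s ^ 2 * -(s ^ 4) = -(t * s ^ 6) := by ring
        linarith [hreh, habs2, b1, b2, hineqz, e]
      have hfin := mul_lt_mul_of_pos_left hs1 hs6
      nlinarith [hfin, key]
end

section
/- Let r(z,w) = Re w + 100(|z|¹⁰ + |z|² Re(z⁸)) + |z|⁶ Im w + |z|² (Im w)². Then there exists c > 0 such that r(z, z¹⁶) ≥ c|z|¹⁶ for all z ∈ ℂ with |z| sufficiently small. -/
/-- with `r(z,w) = Re w + 100(|z|¹⁰ + |z|²Re(z⁸)) + |z|⁶ Im w + |z|²(Im w)²`,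
there is `c > 0` with `r(z, z¹⁶) ≥ c|z|¹⁶` for all sufficiently small `z`. -/
theorem stmt_13 :
    ∃ c > 0, ∃ δ > 0, ∀ z : ℂ, ‖z‖ < δ →
      c * ‖z‖ ^ 16 ≤
        (z ^ 16).re + 100 * (‖z‖ ^ 10 + ‖z‖ ^ 2 * (z ^ 8).re)
          + ‖z‖ ^ 6 * (z ^ 16).im
          + ‖z‖ ^ 2 * ((z ^ 16).im) ^ 2 := by
  refine ⟨1/2, by norm_num, 1/2, by norm_num, fun z hz => ?_⟩
  set s := ‖z‖ with hs
  have hs0 : 0 ≤ s := norm_nonneg z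
  have hs1 : s < 1/2 := hz
  have ht : |(z^8).re| ≤ s^8 := by
    calc |(z^8).re| ≤ ‖z^8‖ := Complex.abs_re_le_norm _
    _ = s^8 := by rw [norm_pow]
  have hI : |(z^16).im| ≤ s^16 := by
    calc |(z^16).im| ≤ ‖z^16‖ := Complex.abs_im_le_norm _
    _ = s^16 := by rw [norm_pow]
  have hsq : (z^8).re^2 + (z^8).im^2 = s^16 := by
    have h := Complex.sq_norm (z^8)
    rw [Complex.normSq_apply, norm_pow] at h
    nlinarith [h]
  have hre16 : (z^16).re = 2*(z^8).re^2 - s^16 := by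
    have h : z^16 = z^8 * z^8 := by ring
    rw [h, Complex.mul_re]
    nlinarith [hsq]
  have ht1 := abs_le.mp ht
  have hI1 := abs_le.mp hI
  rcases le_or_gt (-s^8 + s^14) ((z^8).re) with hc | hc
  · -- 100 s²(s⁸+t) ≥ 100 s¹⁶
    nlinarith [sq_nonneg ((z^8).re), sq_nonneg ((z^16).im), mul_nonneg (mul_nonneg hs0 hs0) (sq_nonneg ((z^16).im)), pow_nonneg hs0 16, pow_nonneg hs0 22, pow_le_pow_of_le_one hs0 (le_of_lt (hs1.trans (by norm_num))) (by norm_num : (16:ℕ) ≤ 22), pow_lt_one₀ hs0 (hs1.trans (by norm_num)) (by norm_num : (6:ℕ) ≠ 0)]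
  · have ht2 : (z^8).re ≤ -(s^8 - s^14) := by linarith
    have hpos : 0 ≤ s^8 - s^14 := by
      nlinarith [pow_le_pow_of_le_one hs0 (le_of_lt (hs1.trans (by norm_num))) (by norm_num : (8:ℕ) ≤ 14)]
    have hsq2 : (s^8 - s^14)^2 ≤ (z^8).re^2 := by
      nlinarith [sq_abs ((z^8).re), neg_le_abs ((z^8).re)]
    have hs6 : s^6 ≤ 1/10 := by
      nlinarith [pow_le_pow_left₀ hs0 (le_of_lt hs1) 6]
    nlinarith [mul_nonneg (mul_nonneg hs0 hs0) (sq_nonneg ((z^16).im)), pow_nonneg hs0 22, pow_nonneg hs0 16, pow_nonneg hs0 2, mul_nonneg (mul_nonneg hs0 hs0) (by linarith [ht1.1] : 0 ≤ s^8 + (z^8).re), pow_le_pow_of_le_one hs0 (le_of_lt (hs1.trans (by norm_num))) (by norm_num : (16:ℕ) ≤ 22), mul_le_mul_of_nonneg_left hs6 (pow_nonneg hs0 16)]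
end

section
/- Let D be a bounded domain in ℂⁿ, p ∈ ∂D, and K the Bergman kernel of D. Suppose h: cl(D)\{p} → ℂ is continuous, holomorphic on D (after removing p), agrees with z ↦ K(z,q) for boundary behavior, and |h(z)| → ∞ as z → p within D, with h nonvanishing near p on cl(D)\{p}. Then 1/h extends to a function in A(D ∩ V) for some neighborhood V of p whose only zero on cl(D ∩ V) is at p; consequently {p} is a local zero set for A(D). -/
/-- if `h` is holomorphic on `D`, continuous on `cl(D)\{p}`, nonvanishing near
`p`, and `|h| → ∞` at `p`, then `1/h` extends to a function in `A(D ∩ V)` for some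
neighborhood `V` of `p` whose only zero on `cl(D ∩ V)` is `p`; so `{p}` is a local zero set
for `A(D)`. -/
theorem stmt_18 (n : ℕ) (D : Set (Fin n → ℂ)) (hD : IsOpen D) (hDc : IsConnected D)
    (hDb : Bornology.IsBounded D) (p : Fin n → ℂ) (hp : p ∈ frontier D)
    (h : (Fin n → ℂ) → ℂ) (hhol : DifferentiableOn ℂ h D)
    (hcont : ContinuousOn h (closure D \ {p}))
    (hblow : Filter.Tendsto (fun z => ‖h z‖)
      (nhdsWithin p (closure D \ {p})) Filter.atTop)
    (hnv : ∃ ε > 0, ∀ z ∈ closure D \ {p}, dist z p < ε → h z ≠ 0) :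
    ∃ V : Set (Fin n → ℂ), IsOpen V ∧ p ∈ V ∧
      ∃ g : (Fin n → ℂ) → ℂ, ContinuousOn g (closure (D ∩ V)) ∧
        DifferentiableOn ℂ g (D ∩ V) ∧ g p = 0 ∧
        (∀ z ∈ closure (D ∩ V), z ≠ p → g z ≠ 0) ∧
        (∀ z ∈ (closure D \ {p}) ∩ V, g z = (h z)⁻¹) := by
  obtain ⟨ε, hε, hnv⟩ := hnv
  have hpD : p ∉ D := by
    rw [hD.frontier_eq] at hp
    exact hp.2
  refine ⟨Metric.ball p (ε/2), Metric.isOpen_ball, Metric.mem_ball_self (by linarith),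
    fun z => if z = p then 0 else (h z)⁻¹, ?_, ?_, if_pos rfl, ?_, ?_⟩
  · -- continuity
    set S := closure (D ∩ Metric.ball p (ε/2)) with hS
    have hsub : S ⊆ closure D ∩ Metric.closedBall p (ε/2) := by
      intro z hz
      exact ⟨closure_mono Set.inter_subset_left hz,
        Metric.closure_ball_subset_closedBall (closure_mono Set.inter_subset_right hz)⟩
    have key : ∀ z ∈ S, z ≠ p → z ∈ closure D \ {p} ∧ h z ≠ 0 := by
      intro z hz hzp
      obtain ⟨h1, h2⟩ := hsub hz
      have : dist z p < ε := lt_of_le_of_lt (Metric.mem_closedBall.mp h2) (by linarith)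
      exact ⟨⟨h1, hzp⟩, hnv z ⟨h1, hzp⟩ this⟩
    intro z hz
    by_cases hzp : z = p
    · -- continuity at p : tendsto to 0
      subst hzp
      have hlim : Filter.Tendsto (fun w => (h w)⁻¹)
          (nhdsWithin z (closure D \ {z})) (nhds 0) := by
        rw [tendsto_zero_iff_norm_tendsto_zero]
        have := hblow.inv_tendsto_atTop
        convert this using 2 with w
        simp
      have hlim' : Filter.Tendsto (fun w => if w = z then 0 else (h w)⁻¹)
          (nhdsWithin z (closure D \ {z})) (nhds 0) := by
        apply hlim.congr'
        filter_upwards [self_mem_nhdsWithin] with w hw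
        have : w ≠ z := hw.2
        simp [this]
      have hmem : S \ {z} ⊆ closure D \ {z} := fun w hw => ⟨(hsub hw.1).1, hw.2⟩
      have : ContinuousWithinAt (fun w => if w = z then 0 else (h w)⁻¹) (S \ {z}) z := by
        have h0 : (fun w => if w = z then (0:ℂ) else (h w)⁻¹) z = 0 := if_pos rfl
        unfold ContinuousWithinAt
        rw [h0]
        exact hlim'.mono_left (nhdsWithin_mono _ hmem)
      rwa [continuousWithinAt_diff_self] at this
    · -- continuity at z ≠ p
      obtain ⟨hz1, hz2⟩ := key z hz hzp
      have hcw : ContinuousWithinAt (fun w => (h w)⁻¹) (closure D \ {p}) z :=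
        ((hcont z hz1).inv₀ hz2)
      have hcw2 : ContinuousWithinAt (fun w => (h w)⁻¹) (S \ {p}) z :=
        hcw.mono (fun w hw => ⟨(hsub hw.1).1, hw.2⟩)
      have hcw3 : ContinuousWithinAt (fun w => if w = p then 0 else (h w)⁻¹) (S \ {p}) z := by
        refine hcw2.congr (fun w hw => if_neg hw.2) (if_neg hzp)
      apply hcw3.mono_of_mem_nhdsWithin
      rw [mem_nhdsWithin]
      exact ⟨{p}ᶜ, isOpen_compl_singleton, hzp, fun w hw => ⟨hw.2, hw.1⟩⟩
  · -- differentiability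
    have hne : ∀ z ∈ D ∩ Metric.ball p (ε/2), h z ≠ 0 := by
      intro z hz
      have hzp : z ≠ p := fun e => hpD (e ▸ hz.1)
      exact hnv z ⟨subset_closure hz.1, hzp⟩ (lt_of_lt_of_le hz.2 (by linarith))
    have hd : DifferentiableOn ℂ (fun w => (h w)⁻¹) (D ∩ Metric.ball p (ε/2)) :=
      (hhol.mono Set.inter_subset_left).inv hne
    apply hd.congr
    intro z hz
    have hzp : z ≠ p := fun e => hpD (e ▸ hz.1)
    exact if_neg hzp
  · -- nonvanishing
    intro z hz hzp
    have h1 : z ∈ closure D := closure_mono Set.inter_subset_left hz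
    have h2 : dist z p ≤ ε/2 :=
      Metric.mem_closedBall.mp (Metric.closure_ball_subset_closedBall
        (closure_mono Set.inter_subset_right hz))
    have hne : h z ≠ 0 := hnv z ⟨h1, hzp⟩ (lt_of_le_of_lt h2 (by linarith))
    simp only [if_neg hzp]
    exact inv_ne_zero hne
  · -- agreement
    intro z hz
    exact if_neg hz.1.2
end
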